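/- Let c_B > 0, c_I > 0, t_B > 0, t_I > 0, and let ξ : ℝ → ℝ be continuous and satisfy (3/4)·c_B·(t - s - t_B) ≤ ξ(t) - ξ(s) ≤ (5/4)·c_I·(t - s + t_I) for all s ∈ ℝ and t ≥ s. Then there exist constants C_max > 0 and d_max > 0 and a continuously differentiable function ξ̃ : ℝ → ℝ such that c_B/2 ≤ ξ̃'(t) ≤ C_max and 0 ≤ ξ̃(t) - ξ(t) ≤ d_max for all t ∈ ℝ. -/

import Mathlib

/-- Existence of a `C¹` modified interface location with derivative between
`c_B/2` and `C_max`, staying within distance `d_max` above `ξ`. -/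
theorem stmt_2 (cB cI tB tI : ℝ) (ξ : ℝ → ℝ)
    (hcB : 0 < cB) (hcI : 0 < cI) (htB : 0 < tB) (htI : 0 < tI)
    (hξ : Continuous ξ)
    (hlow : ∀ s t : ℝ, s ≤ t → 3/4 * cB * (t - s - tB) ≤ ξ t - ξ s)
    (hup : ∀ s t : ℝ, s ≤ t → ξ t - ξ s ≤ 5/4 * cI * (t - s + tI)) :
    ∃ (Cmax dmax : ℝ) (ξtil : ℝ → ℝ), 0 < Cmax ∧ 0 < dmax ∧
      ContDiff ℝ 1 ξtil ∧
      (∀ t : ℝ, cB / 2 ≤ deriv ξtil t ∧ deriv ξtil t ≤ Cmax) ∧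
      (∀ t : ℝ, 0 ≤ ξtil t - ξ t ∧ ξtil t - ξ t ≤ dmax) := by
  set T : ℝ := 3 * tB with hTdef
  have hT : 0 < T := by positivity
  set F : ℝ → ℝ := fun t => ∫ u in (0:ℝ)..t, ξ u with hF
  set ξtil : ℝ → ℝ := fun t => 3/4 * cB * tB + (F (t + T) - F t) / T with hξtil
  -- derivative of ξtil
  have hders : ∀ x : ℝ, HasDerivAt ξtil ((ξ (x + T) - ξ x) / T) x := by
    intro x
    have h1 : HasDerivAt (fun t => F (t + T)) (ξ (x + T)) x := by
      have := (hξ.integral_hasStrictDerivAt 0 (x + T)).hasDerivAt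
      have hcomp := this.comp x ((hasDerivAt_id x).add_const T)
      rw [mul_one] at hcomp
      exact hcomp
    have h2 : HasDerivAt F (ξ x) x := (hξ.integral_hasStrictDerivAt 0 x).hasDerivAt
    have h3 := ((h1.sub h2).div_const T).const_add (3/4 * cB * tB)
    exact h3
  have hderiv : ∀ x : ℝ, deriv ξtil x = (ξ (x + T) - ξ x) / T := fun x => (hders x).deriv
  have hcd : ContDiff ℝ 1 ξtil := by
    rw [contDiff_one_iff_deriv]
    refine ⟨fun x => (hders x).differentiableAt, ?_⟩
    have : deriv ξtil = fun x => (ξ (x + T) - ξ x) / T := funext hderiv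
    rw [this]
    fun_prop
  refine ⟨5/4 * cI * (T + tI) / T, 3/4 * cB * tB + 5/4 * cI * (T/2 + tI), ξtil,
    by positivity, by positivity, hcd, ?_, ?_⟩
  · intro t
    have hle : t ≤ t + T := by linarith
    have hl := hlow t (t + T) hle
    have hu := hup t (t + T) hle
    have hTe : T = 3 * tB := hTdef
    rw [hderiv t]
    constructor
    · rw [le_div_iff₀ hT]
      nlinarith
    · rw [div_le_div_iff₀ hT hT]
      nlinarith
  · intro t
    have hle : t ≤ t + T := by linarith
    have hFdiff : F (t + T) - F t = ∫ u in t..(t + T), ξ u := by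
      have := intervalIntegral.integral_add_adjacent_intervals
        (hξ.intervalIntegrable 0 t : IntervalIntegrable ξ MeasureTheory.volume 0 t)
        (hξ.intervalIntegrable t (t + T) : IntervalIntegrable ξ MeasureTheory.volume t (t + T))
      simp only [hF]
      linarith [this]
    -- lower bound on integral
    have hIl : 3/4 * cB * (T^2/2 - tB * T) ≤ (∫ u in t..(t + T), ξ u) - T * ξ t := by
      have hmono : (∫ u in t..(t + T), 3/4 * cB * (u - t - tB)) ≤
          ∫ u in t..(t + T), (ξ u - ξ t) := by
        apply intervalIntegral.integral_mono_on hle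
        · exact (by fun_prop : Continuous fun u : ℝ => 3/4 * cB * (u - t - tB)).intervalIntegrable _ _
        · exact ((hξ.sub continuous_const).intervalIntegrable _ _)
        · intro u hu
          exact hlow t u hu.1
      have hcalc : (∫ u in t..(t + T), 3/4 * cB * (u - t - tB))
          = 3/4 * cB * (T^2/2 - tB * T) := by
        have : (fun u : ℝ => 3/4 * cB * (u - t - tB))
            = fun u : ℝ => 3/4 * cB * u - 3/4 * cB * (t + tB) := by
          funext u; ring
        rw [this, intervalIntegral.integral_sub, intervalIntegral.integral_const_mul,
          intervalIntegral.integral_const, integral_id]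
        · simp only [smul_eq_mul]; ring
        · exact (by fun_prop : Continuous fun u : ℝ => 3/4 * cB * u).intervalIntegrable _ _
        · exact intervalIntegrable_const
      have hsub : (∫ u in t..(t + T), (ξ u - ξ t)) = (∫ u in t..(t + T), ξ u) - T * ξ t := by
        rw [intervalIntegral.integral_sub (hξ.intervalIntegrable _ _) intervalIntegrable_const,
          intervalIntegral.integral_const]
        simp only [smul_eq_mul]; ring
      rw [hcalc, hsub] at hmono
      exact hmono
    -- upper bound on integral
    have hIu : (∫ u in t..(t + T), ξ u) - T * ξ t ≤ 5/4 * cI * (T^2/2 + tI * T) := by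
      have hmono : (∫ u in t..(t + T), (ξ u - ξ t)) ≤
          ∫ u in t..(t + T), 5/4 * cI * (u - t + tI) := by
        apply intervalIntegral.integral_mono_on hle
        · exact ((hξ.sub continuous_const).intervalIntegrable _ _)
        · exact (by fun_prop : Continuous fun u : ℝ => 5/4 * cI * (u - t + tI)).intervalIntegrable _ _
        · intro u hu
          exact hup t u hu.1
      have hcalc : (∫ u in t..(t + T), 5/4 * cI * (u - t + tI))
          = 5/4 * cI * (T^2/2 + tI * T) := by
        have : (fun u : ℝ => 5/4 * cI * (u - t + tI))
            = fun u : ℝ => 5/4 * cI * u - 5/4 * cI * (t - tI) := by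
          funext u; ring
        rw [this, intervalIntegral.integral_sub, intervalIntegral.integral_const_mul,
          intervalIntegral.integral_const, integral_id]
        · simp only [smul_eq_mul]; ring
        · exact (by fun_prop : Continuous fun u : ℝ => 5/4 * cI * u).intervalIntegrable _ _
        · exact intervalIntegrable_const
      have hsub : (∫ u in t..(t + T), (ξ u - ξ t)) = (∫ u in t..(t + T), ξ u) - T * ξ t := by
        rw [intervalIntegral.integral_sub (hξ.intervalIntegrable _ _) intervalIntegrable_const,
          intervalIntegral.integral_const]
        simp only [smul_eq_mul]; ring
      rw [hcalc, hsub] at hmono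
      exact hmono
    have hval : ξtil t - ξ t = 3/4 * cB * tB + ((∫ u in t..(t + T), ξ u) - T * ξ t) / T := by
      simp only [hξtil, hFdiff]
      field_simp
      ring
    rw [hval]
    have hTe : T = 3 * tB := hTdef
    constructor
    · have hpos : (0:ℝ) ≤ 3/4 * cB * (T^2/2 - tB * T) := by
        rw [hTe]; nlinarith [mul_pos hcB (mul_pos htB htB)]
      have hX : (0:ℝ) ≤ (∫ u in t..(t + T), ξ u) - T * ξ t := le_trans hpos hIl
      have h1 : (0:ℝ) ≤ ((∫ u in t..(t + T), ξ u) - T * ξ t) / T := div_nonneg hX hT.le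
      nlinarith
    · have h2 : ((∫ u in t..(t + T), ξ u) - T * ξ t) / T ≤ 5/4 * cI * (T/2 + tI) := by
        rw [div_le_iff₀ hT]
        nlinarith
      linarith
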